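/- Let f : [0,1] → [0,1] be a piecewise continuous interval map with no connections and no periodic points, let p be a point whose forward orbit avoids the partition set D, let μ_n = (1/n) Σ_{k=0}^{n-1} δ_{f^k(p)}, and let μ be a weak* limit of a subsequence (μ_{n_j}). Then μ is f-invariant: μ(f⁻¹(B)) = μ(B) for every Borel set B ⊆ [0,1]. -/

import Mathlib

open Set Filter MeasureTheory Topology
open scoped ENNReal

/-- Data witnessing that `f` is a piecewise continuous interval map on `[0,1]`:
a partition `0 = pt 0 < pt 1 < ⋯ < pt (d+1) = 1` such that `f` is continuous on each
open subinterval and has one-sided limits `wR i` (right limit at the left endpoint)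
and `wL i` (left limit at the right endpoint) on each subinterval. -/
structure PiecewiseContData (f : ℝ → ℝ) where
  d : ℕ
  pt : Fin (d + 2) → ℝ
  mono : StrictMono pt
  first : pt 0 = 0
  last : pt (Fin.last (d + 1)) = 1
  cont : ∀ i : Fin (d + 1), ContinuousOn f (Ioo (pt i.castSucc) (pt i.succ))
  wR : Fin (d + 1) → ℝ
  wL : Fin (d + 1) → ℝ
  wR_lim : ∀ i : Fin (d + 1),
    Tendsto f (𝓝[Ioo (pt i.castSucc) (pt i.succ)] (pt i.castSucc)) (𝓝 (wR i))
  wL_lim : ∀ i : Fin (d + 1),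
    Tendsto f (𝓝[Ioo (pt i.castSucc) (pt i.succ)] (pt i.succ)) (𝓝 (wL i))

/-- The set `D` of partition points. -/
def PiecewiseContData.D {f : ℝ → ℝ} (P : PiecewiseContData f) : Set ℝ :=
  Set.range P.pt

/-- The set `W` of one-sided limit values of `f` at the partition points. -/
def PiecewiseContData.W {f : ℝ → ℝ} (P : PiecewiseContData f) : Set ℝ :=
  Set.range P.wR ∪ Set.range P.wL

/-- The no-connections condition: no forward iterate (`k ≥ 1`) of a partition point lies
in `D`, and no forward iterate (`k ≥ 0`) of a one-sided limit value lies in `D`. -/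
def PiecewiseContData.NoConnections {f : ℝ → ℝ} (P : PiecewiseContData f) : Prop :=
  (∀ i : Fin (P.d + 2), ∀ k : ℕ, 1 ≤ k → f^[k] (P.pt i) ∉ P.D) ∧
  (∀ w ∈ P.W, ∀ k : ℕ, f^[k] w ∉ P.D)

/-- `f` has no periodic points in `[0,1]`. -/
def NoPeriodicPts (f : ℝ → ℝ) : Prop :=
  ∀ x ∈ Icc (0:ℝ) 1, ∀ k : ℕ, 1 ≤ k → f^[k] x ≠ x

/-- The Birkhoff average `μ_n = (1/n) ∑_{k<n} δ_{f^k(p)}` of Dirac measures along the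
orbit of `p`. -/
noncomputable def birkhoffMeasure (f : ℝ → ℝ) (p : ℝ) (n : ℕ) : Measure ℝ :=
  (n : ℝ≥0∞)⁻¹ • ∑ k ∈ Finset.range n, Measure.dirac (f^[k] p)


open scoped Classical NNReal

section Aux

lemma aux_integrable_dirac (h : ℝ → ℝ) (a : ℝ) : Integrable h (Measure.dirac a) := by
  have hae : h =ᵐ[Measure.dirac a] fun _ => h a := by
    rw [Filter.EventuallyEq, ae_iff]
    apply measure_mono_null (t := {a}ᶜ)
    · intro x hx
      simp only [mem_compl_iff, mem_singleton_iff]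
      intro hxa
      rw [mem_setOf_eq, hxa] at hx
      exact hx rfl
    · simp [Measure.dirac_apply' _ (MeasurableSet.singleton a).compl]
  exact (integrable_const (h a)).congr hae.symm

lemma aux_birkhoff_integral (f : ℝ → ℝ) (p : ℝ) (h : ℝ → ℝ) (n : ℕ) :
    ∫ x, h x ∂(birkhoffMeasure f p n)
      = (n : ℝ)⁻¹ * ∑ k ∈ Finset.range n, h (f^[k] p) := by
  rw [birkhoffMeasure, integral_smul_measure,
    integral_finset_sum_measure (fun k _ => aux_integrable_dirac h _)]
  simp [integral_dirac, ENNReal.toReal_inv, smul_eq_mul]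

lemma aux_birkhoff_apply (f : ℝ → ℝ) (p : ℝ) (n : ℕ) (S : Set ℝ) (hS : MeasurableSet S) :
    birkhoffMeasure f p n S
      = (n : ℝ≥0∞)⁻¹ * ((Finset.range n).filter (fun k => f^[k] p ∈ S)).card := by
  rw [birkhoffMeasure, Measure.smul_apply, Measure.finset_sum_apply, smul_eq_mul]
  congr 1
  rw [Finset.sum_congr rfl (fun k _ => Measure.dirac_apply' _ hS)]
  simp only [Set.indicator_apply, Pi.one_apply]
  rw [Finset.sum_boole]

lemma aux_birkhoff_prob (f : ℝ → ℝ) (p : ℝ) (n : ℕ) (hn : n ≠ 0) :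
    IsProbabilityMeasure (birkhoffMeasure f p n) := by
  refine ⟨?_⟩
  rw [aux_birkhoff_apply f p n univ MeasurableSet.univ]
  simp only [mem_univ, Finset.filter_true, Finset.card_range]
  exact ENNReal.inv_mul_cancel (by exact_mod_cast hn) (by simp)

lemma aux_count_shift (x : ℕ → ℝ) (S V : Set ℝ) (r : ℕ)
    (h : ∀ l, x l ∈ S → x (l + r) ∈ V) (N : ℕ) :
    ((Finset.range N).filter (fun k => x k ∈ S)).card
      ≤ ((Finset.range N).filter (fun k => x k ∈ V)).card + r := by
  classical
  set A := (Finset.range N).filter (fun k => x k ∈ S) with hA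
  have hsplit := Finset.card_filter_add_card_filter_not
    (s := A) (p := fun l => l + r < N)
  have h1 : (A.filter (fun l => l + r < N)).card
      ≤ ((Finset.range N).filter (fun k => x k ∈ V)).card := by
    apply Finset.card_le_card_of_injOn (fun l => l + r)
    · intro l hl
      simp only [Finset.mem_coe, Finset.mem_filter, Finset.mem_range, hA] at hl ⊢
      exact ⟨hl.2, h l hl.1.2⟩
    · intro a _ b _ hab
      simpa using hab
  have h2 : (A.filter (fun l => ¬ l + r < N)).card ≤ r := by
    have hsub : (A.filter (fun l => ¬ l + r < N)) ⊆ Finset.Ico (N - r) N := by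
      intro l hl
      simp only [Finset.mem_filter, Finset.mem_range, hA] at hl
      simp only [Finset.mem_Ico]
      omega
    calc _ ≤ (Finset.Ico (N - r) N).card := Finset.card_le_card hsub
    _ ≤ r := by rw [Nat.card_Ico]; omega
  omega

lemma aux_inter_preimage_measurable (f : ℝ → ℝ) (t s : Set ℝ) (ht : MeasurableSet t)
    (hf : ContinuousOn f t) (hs : MeasurableSet s) : MeasurableSet (t ∩ f ⁻¹' s) := by
  have hm : Measurable (t.restrict f) :=
    (continuousOn_iff_continuous_restrict.mp hf).measurable
  have h2 := (MeasurableEmbedding.subtype_coe ht).measurableSet_image.mpr (hm hs)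
  convert h2 using 1
  ext x
  simp only [Set.mem_inter_iff, Set.mem_preimage, Set.mem_image, Set.restrict_apply]
  constructor
  · rintro ⟨hxt, hxs⟩; exact ⟨⟨x, hxt⟩, hxs, rfl⟩
  · rintro ⟨⟨y, hy⟩, hys, rfl⟩; exact ⟨hy, hys⟩

end Aux

section Aux2

variable {f : ℝ → ℝ}

lemma aux_locate (P : PiecewiseContData f) {x : ℝ} (hx : x ∈ Icc (0:ℝ) 1)
    (hxD : x ∉ P.D) :
    ∃ i : Fin (P.d + 1), x ∈ Ioo (P.pt i.castSucc) (P.pt i.succ) := by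
  classical
  have hne : ((Finset.univ : Finset (Fin (P.d + 2))).filter (fun j => P.pt j < x)).Nonempty := by
    refine ⟨0, ?_⟩
    simp only [Finset.mem_filter, Finset.mem_univ, true_and, P.first]
    rcases lt_or_eq_of_le hx.1 with h | h
    · exact h
    · exact absurd ⟨0, P.first.trans h⟩ hxD
  set i0 := _root_.Finset.max' _ hne with hi0
  have hi0mem := Finset.max'_mem _ hne
  rw [Finset.mem_filter] at hi0mem
  have hi0lt : P.pt i0 < x := hi0mem.2
  have hi0ne : i0 ≠ Fin.last (P.d + 1) := by
    intro h
    rw [h, P.last] at hi0lt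
    exact absurd hx.2 (not_le.mpr hi0lt)
  refine ⟨i0.castPred hi0ne, ?_⟩
  rw [Fin.castSucc_castPred]
  refine ⟨hi0lt, ?_⟩
  have hle : x ≤ P.pt (i0.castPred hi0ne).succ := by
    by_contra hlt
    push_neg at hlt
    have hmem : (i0.castPred hi0ne).succ ∈
        (Finset.univ : Finset (Fin (P.d + 2))).filter (fun j => P.pt j < x) := by
      simp only [Finset.mem_filter, Finset.mem_univ, true_and]; exact hlt
    have := Finset.le_max' _ _ hmem
    rw [← hi0] at this
    have h2 : (i0.castPred hi0ne).castSucc < (i0.castPred hi0ne).succ :=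
      Fin.castSucc_lt_succ
    rw [Fin.castSucc_castPred] at h2
    exact absurd (lt_of_lt_of_le h2 this) (lt_irrefl _)
  rcases lt_or_eq_of_le hle with h | h
  · exact h
  · exact absurd ⟨_, h.symm⟩ hxD

lemma aux_contAt (P : PiecewiseContData f) {x : ℝ} (hx : x ∈ Icc (0:ℝ) 1)
    (hxD : x ∉ P.D) : ContinuousAt f x := by
  obtain ⟨i, hi⟩ := aux_locate P hx hxD
  exact (P.cont i).continuousAt (isOpen_Ioo.mem_nhds hi)

lemma aux_iter_contAt (hf : MapsTo f (Icc (0:ℝ) 1) (Icc (0:ℝ) 1))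
    (P : PiecewiseContData f) {w : ℝ} (hw : w ∈ Icc (0:ℝ) 1)
    (hworb : ∀ k, f^[k] w ∉ P.D) : ∀ k, ContinuousAt f^[k] w := by
  intro k
  induction k with
  | zero => simpa using continuousAt_id
  | succ k ih =>
    rw [Function.iterate_succ']
    exact ContinuousAt.comp
      (aux_contAt P (hf.iterate k hw) (hworb k)) ih

lemma aux_E_eq (P : PiecewiseContData f) :
    Ioo (0:ℝ) 1 \ P.D = ⋃ i : Fin (P.d + 1), Ioo (P.pt i.castSucc) (P.pt i.succ) := by
  ext x
  simp only [mem_diff, mem_iUnion]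
  constructor
  · rintro ⟨hx, hxD⟩
    exact aux_locate P ⟨le_of_lt hx.1, le_of_lt hx.2⟩ hxD
  · rintro ⟨i, hi⟩
    have h0 : (0:ℝ) ≤ P.pt i.castSucc := by
      rw [← P.first]; exact P.mono.monotone (Fin.zero_le _)
    have h1 : P.pt i.succ ≤ 1 := by
      rw [← P.last]; exact P.mono.monotone (Fin.le_last _)
    refine ⟨⟨lt_of_le_of_lt h0 hi.1, lt_of_lt_of_le hi.2 h1⟩, ?_⟩
    rintro ⟨j, rfl⟩
    have hj1 : i.castSucc < j := P.mono.lt_iff_lt.mp hi.1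
    have hj2 : j < i.succ := P.mono.lt_iff_lt.mp hi.2
    have := Fin.castSucc_lt_iff_succ_le.mp hj1
    exact absurd (lt_of_le_of_lt this hj2) (lt_irrefl _)

lemma aux_E_inter_meas (P : PiecewiseContData f) {s : Set ℝ} (hs : MeasurableSet s) :
    MeasurableSet ((Ioo (0:ℝ) 1 \ P.D) ∩ f ⁻¹' s) := by
  rw [aux_E_eq P, Set.iUnion_inter]
  exact MeasurableSet.iUnion fun i =>
    aux_inter_preimage_measurable f _ s measurableSet_Ioo (P.cont i) hs

lemma aux_D_meas (P : PiecewiseContData f) : MeasurableSet P.D :=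
  (Set.finite_range P.pt).measurableSet

lemma aux_lim_mem (hf : MapsTo f (Icc (0:ℝ) 1) (Icc (0:ℝ) 1)) {a b x w : ℝ}
    (hab : a < b) (ha : (0:ℝ) ≤ a) (hb : b ≤ 1) (hx : x ∈ Icc a b)
    (h : Tendsto f (𝓝[Ioo a b] x) (𝓝 w)) : w ∈ Icc (0:ℝ) 1 := by
  have hcl : x ∈ closure (Ioo a b) := by rw [closure_Ioo hab.ne]; exact hx
  haveI : (𝓝[Ioo a b] x).NeBot := mem_closure_iff_nhdsWithin_neBot.mp hcl
  refine isClosed_Icc.mem_of_tendsto h ?_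
  filter_upwards [self_mem_nhdsWithin] with z hz
  exact hf ⟨le_trans ha (le_of_lt hz.1), le_trans (le_of_lt hz.2) hb⟩

lemma aux_mem_right {c b : ℝ} {t : Set ℝ} (hcb : c < b) (ht : t ∈ 𝓝[Ioo c b] c) :
    ∃ δ > 0, Ioo c (c + δ) ⊆ t := by
  rw [Metric.mem_nhdsWithin_iff] at ht
  obtain ⟨ε, hε, hsub⟩ := ht
  refine ⟨min ε (b - c), lt_min hε (by linarith), ?_⟩
  intro z hz
  apply hsub
  have h1 : c < z := hz.1
  have h2 : z < c + min ε (b - c) := hz.2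
  have h3 : min ε (b - c) ≤ ε := min_le_left _ _
  have h4 : min ε (b - c) ≤ b - c := min_le_right _ _
  constructor
  · rw [Metric.mem_ball, Real.dist_eq, abs_lt]; constructor <;> linarith
  · exact ⟨h1, by linarith⟩

lemma aux_mem_left {a c : ℝ} {t : Set ℝ} (hac : a < c) (ht : t ∈ 𝓝[Ioo a c] c) :
    ∃ δ > 0, Ioo (c - δ) c ⊆ t := by
  rw [Metric.mem_nhdsWithin_iff] at ht
  obtain ⟨ε, hε, hsub⟩ := ht
  refine ⟨min ε (c - a), lt_min hε (by linarith), ?_⟩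
  intro z hz
  apply hsub
  have h1 : z < c := hz.2
  have h2 : c - min ε (c - a) < z := hz.1
  have h3 : min ε (c - a) ≤ ε := min_le_left _ _
  have h4 : min ε (c - a) ≤ c - a := min_le_right _ _
  constructor
  · rw [Metric.mem_ball, Real.dist_eq, abs_lt]; constructor <;> linarith
  · exact ⟨by linarith, h1⟩

end Aux2

set_option maxHeartbeats 1000000 in
/-- any weak* limit `μ` of a subsequence of the Birkhoff averages along the
orbit of `p` (whose orbit avoids the partition set `D`) is `f`-invariant. -/
theorem stmt8 (f : ℝ → ℝ) (hf : MapsTo f (Icc (0:ℝ) 1) (Icc (0:ℝ) 1))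
    (P : PiecewiseContData f) (hnc : P.NoConnections) (hnp : NoPeriodicPts f)
    (p : ℝ) (hp : p ∈ Icc (0:ℝ) 1) (hporb : ∀ k : ℕ, f^[k] p ∉ P.D)
    (n : ℕ → ℕ) (hn : StrictMono n) (μ : Measure ℝ) (hμ : IsProbabilityMeasure μ)
    (hconv : ∀ φ : ℝ → ℝ, Continuous φ →
      Tendsto (fun j => ∫ x, φ x ∂(birkhoffMeasure f p (n j))) atTop
        (𝓝 (∫ x, φ x ∂μ))) :
    ∀ B : Set ℝ, MeasurableSet B → μ (f ⁻¹' B) = μ B := by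
  classical
  set x : ℕ → ℝ := fun k => f^[k] p with hxdef
  have hxIcc : ∀ k, x k ∈ Icc (0:ℝ) 1 := fun k => hf.iterate k hp
  set N : ℕ → ℕ := fun j => n (j + 1) with hNdef
  have hNge : ∀ j, j + 1 ≤ N j := fun j => hn.le_apply
  have hNpos : ∀ j, N j ≠ 0 := fun j => by have := hNge j; omega
  have hNtop : Tendsto N atTop atTop :=
    tendsto_atTop_mono (fun j => le_trans (Nat.le_succ j) (hNge j)) tendsto_id
  set ν : ℕ → Measure ℝ := fun j => birkhoffMeasure f p (N j) with hνdef
  have hνprob : ∀ j, IsProbabilityMeasure (ν j) := fun j => aux_birkhoff_prob _ _ _ (hNpos j)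
  set Pν : ℕ → ProbabilityMeasure ℝ := fun j => ⟨ν j, hνprob j⟩ with hPνdef
  set Pμ : ProbabilityMeasure ℝ := ⟨μ, hμ⟩ with hPμdef
  have hPtend : Tendsto Pν atTop (𝓝 Pμ) := by
    rw [MeasureTheory.ProbabilityMeasure.tendsto_iff_forall_integral_tendsto]
    intro φ
    exact (hconv φ φ.continuous).comp (tendsto_add_atTop_nat 1)
  have hclosed : ∀ F : Set ℝ, IsClosed F → (limsup (fun j => ν j F) atTop) ≤ μ F :=
    fun F hF => MeasureTheory.ProbabilityMeasure.limsup_measure_closed_le_of_tendsto hPtend hF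
  have hopen : ∀ G : Set ℝ, IsOpen G → μ G ≤ liminf (fun j => ν j G) atTop :=
    fun G hG => MeasureTheory.ProbabilityMeasure.le_liminf_measure_open_of_tendsto hPtend hG
  have hνapply : ∀ (j : ℕ) (S : Set ℝ), MeasurableSet S →
      ν j S = ((N j : ℝ≥0∞))⁻¹ * ((Finset.range (N j)).filter (fun k => x k ∈ S)).card :=
    fun j S hS => aux_birkhoff_apply f p (N j) S hS
  have hνint : ∀ (j : ℕ) (h : ℝ → ℝ),
      ∫ z, h z ∂(ν j) = ((N j : ℝ))⁻¹ * ∑ k ∈ Finset.range (N j), h (x k) :=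
    fun j h => aux_birkhoff_integral f p h (N j)
  have hνzero : ∀ (j : ℕ) (S : Set ℝ), MeasurableSet S → (∀ k, x k ∉ S) → ν j S = 0 := by
    intro j S hS hk
    rw [hνapply j S hS]
    have : (Finset.range (N j)).filter (fun k => x k ∈ S) = ∅ :=
      Finset.filter_false_of_mem (fun k _ => hk k)
    rw [this]
    simp
  -- Step C : partition points carry no mass
  have hD0 : ∀ c ∈ P.D, μ ({c} : Set ℝ) = 0 := by
    intro c hcD
    by_contra hc
    set ε : ℝ≥0∞ := μ {c} with hε
    have hε0 : ε ≠ 0 := hc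
    have hε1 : ε ≤ 1 := prob_le_one
    have hεtop : ε ≠ ⊤ := ne_top_of_le_ne_top ENNReal.one_ne_top hε1
    set ε4 : ℝ≥0∞ := ε / 2 / 2 with hε4
    have hε40 : ε4 ≠ 0 := by
      simp only [hε4, ne_eq, ENNReal.div_eq_zero_iff, ENNReal.ofNat_ne_top, or_false]
      exact hε0
    have hε4le : ε4 ≤ ε := le_trans (ENNReal.half_le_self) (ENNReal.half_le_self)
    have hε4top : ε4 ≠ ⊤ := ne_top_of_le_ne_top hεtop hε4le
    have hxc : ∀ k, x k ≠ c := by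
      intro k h
      apply hporb k
      show f^[k] p ∈ P.D
      rw [show f^[k] p = c from h]
      exact hcD
    have hside : ∀ δ : ℝ, 0 < δ → ∀ᶠ j in atTop,
        ε4 ≤ ν j (Ioo (c - δ) c) ∨ ε4 ≤ ν j (Ioo c (c + δ)) := by
      intro δ hδ
      have hopenδ := hopen (Ioo (c - δ) (c + δ)) isOpen_Ioo
      have hμδ : ε ≤ μ (Ioo (c - δ) (c + δ)) := by
        rw [hε]
        apply measure_mono
        rw [Set.singleton_subset_iff]
        exact ⟨by linarith, by linarith⟩
      have hlt : ε / 2 < liminf (fun j => ν j (Ioo (c - δ) (c + δ))) atTop :=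
        lt_of_lt_of_le (ENNReal.half_lt_self hε0 hεtop) (le_trans hμδ hopenδ)
      have hev := Filter.eventually_lt_of_lt_liminf hlt
      filter_upwards [hev] with j hj
      have hsplit : ν j (Ioo (c - δ) (c + δ))
          ≤ ν j (Ioo (c - δ) c) + ν j (Ioo c (c + δ)) := by
        have hsub : Ioo (c - δ) (c + δ) ⊆ (Ioo (c - δ) c ∪ Ioo c (c + δ)) ∪ {c} := by
          intro z hz
          rcases lt_trichotomy z c with h | h | h
          · exact Or.inl (Or.inl ⟨hz.1, h⟩)
          · exact Or.inr h
          · exact Or.inl (Or.inr ⟨h, hz.2⟩)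
        calc ν j (Ioo (c - δ) (c + δ))
            ≤ ν j ((Ioo (c - δ) c ∪ Ioo c (c + δ)) ∪ {c}) := measure_mono hsub
          _ ≤ ν j (Ioo (c - δ) c ∪ Ioo c (c + δ)) + ν j {c} := measure_union_le _ _
          _ = ν j (Ioo (c - δ) c ∪ Ioo c (c + δ)) := by
              rw [hνzero j {c} (measurableSet_singleton c) (fun k hk => hxc k hk), add_zero]
          _ ≤ ν j (Ioo (c - δ) c) + ν j (Ioo c (c + δ)) := measure_union_le _ _
      by_contra hcon
      push_neg at hcon
      have hadd := ENNReal.add_lt_add hcon.1 hcon.2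
      rw [ENNReal.add_halves] at hadd
      exact absurd (lt_of_le_of_lt hsplit hadd) (not_lt.mpr hj.le)
    have hpigeon : (∀ δ : ℝ, 0 < δ → ∃ᶠ j in atTop, ε4 ≤ ν j (Ioo (c - δ) c))
        ∨ (∀ δ : ℝ, 0 < δ → ∃ᶠ j in atTop, ε4 ≤ ν j (Ioo c (c + δ))) := by
      by_cases hL : ∀ δ : ℝ, 0 < δ → ∃ᶠ j in atTop, ε4 ≤ ν j (Ioo (c - δ) c)
      · exact Or.inl hL
      · push_neg at hL
        obtain ⟨δ0, hδ0, hnotL⟩ := hL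
        right
        intro δ hδ
        have hev := (hside (min δ δ0) (lt_min hδ hδ0)).and hnotL
        refine hev.frequently.mono ?_
        rintro j ⟨hor, hnl⟩
        rcases hor with h | h
        · refine absurd (le_trans h (measure_mono (Ioo_subset_Ioo ?_ le_rfl))) (not_le.mpr hnl)
          have := min_le_right δ δ0; linarith
        · refine le_trans h (measure_mono (Ioo_subset_Ioo le_rfl ?_))
          have := min_le_left δ δ0; linarith
    obtain ⟨i0, hi0⟩ := hcD
    have hkeyex : ∃ w : ℝ, (∀ k, f^[k] w ∉ P.D) ∧ w ∈ Icc (0:ℝ) 1 ∧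
        ∀ V ∈ 𝓝 w, ∃ S : Set ℝ, MeasurableSet S ∧ (∀ z ∈ S, f z ∈ V) ∧
          (∃ᶠ j in atTop, ε4 ≤ ν j S) := by
      have hcIcc : c ∈ Icc (0:ℝ) 1 := by
        constructor
        · rw [← hi0, ← P.first]; exact P.mono.monotone (Fin.zero_le _)
        · rw [← hi0, ← P.last]; exact P.mono.monotone (Fin.le_last _)
      rcases hpigeon with hL | hR
      · -- left-side case : c is a right endpoint, use wL
        have hi0ne : i0 ≠ 0 := by
          intro h0
          rw [h0, P.first] at hi0
          obtain ⟨j, hj⟩ := (hL 1 one_pos).exists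
          have hz : ν j (Ioo (c - 1) c) = 0 := by
            refine hνzero j _ measurableSet_Ioo (fun k hk => ?_)
            have h1 := (hxIcc k).1
            have h2 := hk.2
            rw [← hi0] at h2
            linarith
          rw [hz] at hj
          exact hε40 (le_antisymm hj zero_le)
        set i : Fin (P.d + 1) := i0.pred hi0ne with hi
        have hisucc : i.succ = i0 := Fin.succ_pred i0 hi0ne
        have hac : P.pt i.castSucc < c := by
          rw [← hi0, ← hisucc]; exact P.mono (Fin.castSucc_lt_succ (i := i))
        have hwlim : Tendsto f (𝓝[Ioo (P.pt i.castSucc) c] c) (𝓝 (P.wL i)) := by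
          have h := P.wL_lim i
          rw [hisucc, hi0] at h
          exact h
        have hworb : ∀ k, f^[k] (P.wL i) ∉ P.D :=
          hnc.2 (P.wL i) (Or.inr ⟨i, rfl⟩)
        have ha0 : (0:ℝ) ≤ P.pt i.castSucc := by
          rw [← P.first]; exact P.mono.monotone (Fin.zero_le _)
        have hwIcc : P.wL i ∈ Icc (0:ℝ) 1 :=
          aux_lim_mem hf hac ha0 hcIcc.2 ⟨hac.le, le_rfl⟩ hwlim
        refine ⟨P.wL i, hworb, hwIcc, ?_⟩
        intro V hV
        obtain ⟨δ, hδ, hsub⟩ := aux_mem_left hac (hwlim hV)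
        exact ⟨Ioo (c - δ) c, measurableSet_Ioo, fun z hz => hsub hz, hL δ hδ⟩
      · -- right-side case : c is a left endpoint, use wR
        have hi0ne : i0 ≠ Fin.last (P.d + 1) := by
          intro h0
          rw [h0, P.last] at hi0
          obtain ⟨j, hj⟩ := (hR 1 one_pos).exists
          have hz : ν j (Ioo c (c + 1)) = 0 := by
            refine hνzero j _ measurableSet_Ioo (fun k hk => ?_)
            have h1 := (hxIcc k).2
            have h2 := hk.1
            rw [← hi0] at h2
            linarith
          rw [hz] at hj
          exact hε40 (le_antisymm hj zero_le)
        set i : Fin (P.d + 1) := i0.castPred hi0ne with hi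
        have hicast : i.castSucc = i0 := Fin.castSucc_castPred i0 hi0ne
        have hcb : c < P.pt i.succ := by
          rw [← hi0, ← hicast]; exact P.mono (Fin.castSucc_lt_succ (i := i))
        have hwlim : Tendsto f (𝓝[Ioo c (P.pt i.succ)] c) (𝓝 (P.wR i)) := by
          have h := P.wR_lim i
          rw [hicast, hi0] at h
          exact h
        have hworb : ∀ k, f^[k] (P.wR i) ∉ P.D :=
          hnc.2 (P.wR i) (Or.inl ⟨i, rfl⟩)
        have hb1 : P.pt i.succ ≤ 1 := by
          rw [← P.last]; exact P.mono.monotone (Fin.le_last _)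
        have hwIcc : P.wR i ∈ Icc (0:ℝ) 1 :=
          aux_lim_mem hf hcb hcIcc.1 hb1 ⟨le_rfl, hcb.le⟩ hwlim
        refine ⟨P.wR i, hworb, hwIcc, ?_⟩
        intro V hV
        obtain ⟨δ, hδ, hsub⟩ := aux_mem_right hcb (hwlim hV)
        exact ⟨Ioo c (c + δ), measurableSet_Ioo, fun z hz => hsub hz, hR δ hδ⟩
    obtain ⟨w, hworb, hwIcc, happ⟩ := hkeyex
    have hcontIter : ∀ k, ContinuousAt f^[k] w := aux_iter_contAt hf P hwIcc hworb
    have key2 : ∀ k : ℕ, ∀ V ∈ 𝓝 (f^[k] w), ∃ S : Set ℝ, MeasurableSet S ∧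
        (∀ z ∈ S, f^[k+1] z ∈ V) ∧ (∃ᶠ j in atTop, ε4 ≤ ν j S) := by
      intro k V hV
      obtain ⟨S, hSm, hSmap, hSfreq⟩ :=
        happ ((f^[k]) ⁻¹' V) ((hcontIter k).preimage_mem_nhds hV)
      refine ⟨S, hSm, fun z hz => ?_, hSfreq⟩
      rw [Function.iterate_succ_apply]
      exact hSmap z hz
    have key3 : ∀ k : ℕ, ∀ a : ℝ≥0∞, a < ε4 → ∀ V : Set ℝ, MeasurableSet V →
        V ∈ 𝓝 (f^[k] w) → ∃ᶠ j in atTop, a ≤ ν j V := by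
      intro k a ha V hVm hV
      obtain ⟨S, hSm, hSmap, hSfreq⟩ := key2 k V hV
      have hcount : ∀ j, ν j S ≤ ν j V + ((k+1 : ℕ) : ℝ≥0∞) / (N j : ℝ≥0∞) := by
        intro j
        rw [hνapply j S hSm, hνapply j V hVm]
        have hcs := aux_count_shift x S V (k+1) (fun l hl => by
          have : x (l + (k+1)) = f^[k+1] (x l) := by
            rw [hxdef]
            simp only []
            rw [Nat.add_comm l (k+1)]
            exact Function.iterate_add_apply f (k+1) l p
          rw [this]
          exact hSmap (x l) hl) (N j)
        calc ((N j : ℝ≥0∞))⁻¹ * ((Finset.range (N j)).filter (fun k => x k ∈ S)).card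
            ≤ ((N j : ℝ≥0∞))⁻¹
              * (((Finset.range (N j)).filter (fun k => x k ∈ V)).card + ((k+1:ℕ) : ℝ≥0∞)) := by
              gcongr
              exact_mod_cast hcs
          _ = ((N j : ℝ≥0∞))⁻¹ * ((Finset.range (N j)).filter (fun k => x k ∈ V)).card
              + ((k+1 : ℕ) : ℝ≥0∞) / (N j : ℝ≥0∞) := by
              rw [mul_add]
              congr 1
              rw [ENNReal.div_eq_inv_mul, mul_comm]
      have hb0 : 0 < ε4 - a := tsub_pos_of_lt ha
      have htend : Tendsto (fun j => ((k+1:ℕ) : ℝ≥0∞) / (N j : ℝ≥0∞)) atTop (𝓝 0) := by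
        have h2 : Tendsto (fun j => ((N j : ℕ) : ℝ≥0∞)⁻¹) atTop (𝓝 0) :=
          ENNReal.tendsto_inv_nat_nhds_zero.comp hNtop
        have h3 := ENNReal.Tendsto.const_mul h2
          (Or.inr (ENNReal.natCast_ne_top (k+1)))
        rw [mul_zero] at h3
        simpa [div_eq_mul_inv] using h3
      have hev2 : ∀ᶠ j in atTop, ((k+1:ℕ) : ℝ≥0∞) / (N j : ℝ≥0∞) < ε4 - a :=
        htend.eventually_lt_const hb0
      refine (hSfreq.and_eventually hev2).mono ?_
      rintro j ⟨hj1, hj2⟩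
      by_contra hcon
      push_neg at hcon
      have h4 := ENNReal.add_lt_add hcon hj2
      rw [add_tsub_cancel_of_le ha.le] at h4
      exact absurd (lt_of_le_of_lt (le_trans hj1 (hcount j)) h4) (lt_irrefl _)
    have key4 : ∀ k : ℕ, ε4 ≤ μ {f^[k] w} := by
      intro k
      have hFm : ∀ m : ℕ,
          ε4 ≤ μ (Icc (f^[k] w - 1/((m:ℝ)+1)) (f^[k] w + 1/((m:ℝ)+1))) := by
        intro m
        have hr : (0:ℝ) < 1/((m:ℝ)+1) := by positivity
        by_contra hcon
        push_neg at hcon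
        obtain ⟨a, ha1, ha2⟩ := exists_between hcon
        have hV : Ioo (f^[k] w - 1/((m:ℝ)+1)) (f^[k] w + 1/((m:ℝ)+1)) ∈ 𝓝 (f^[k] w) :=
          Ioo_mem_nhds (by linarith) (by linarith)
        have hfreq := key3 k a ha2 _ measurableSet_Ioo hV
        have hlimsup : a ≤ limsup
            (fun j => ν j (Icc (f^[k] w - 1/((m:ℝ)+1)) (f^[k] w + 1/((m:ℝ)+1)))) atTop := by
          exact le_limsup_of_frequently_le
            (hfreq.mono (fun j hj => le_trans hj (measure_mono Ioo_subset_Icc_self)))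
        exact absurd (le_trans hlimsup (hclosed _ isClosed_Icc)) (not_le.mpr ha1)
      have hanti : Antitone (fun m : ℕ =>
          Icc (f^[k] w - 1/((m:ℝ)+1)) (f^[k] w + 1/((m:ℝ)+1))) := by
        intro m m' hmm'
        have h1 : (0:ℝ) < (m:ℝ) + 1 := by positivity
        have h2 : (m:ℝ) + 1 ≤ (m':ℝ) + 1 := by
          have : (m:ℝ) ≤ (m':ℝ) := by exact_mod_cast hmm'
          linarith
        have h3 : 1/((m':ℝ)+1) ≤ 1/((m:ℝ)+1) := one_div_le_one_div_of_le h1 h2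
        exact Icc_subset_Icc (by linarith) (by linarith)
      have hiFm : (⋂ m : ℕ, Icc (f^[k] w - 1/((m:ℝ)+1)) (f^[k] w + 1/((m:ℝ)+1)))
          = {f^[k] w} := by
        ext z
        simp only [mem_iInter, mem_Icc, mem_singleton_iff]
        constructor
        · intro h
          by_contra hne
          have habs : 0 < |z - f^[k] w| := by
            rw [abs_pos, sub_ne_zero]
            exact hne
          obtain ⟨m, hm⟩ := exists_nat_one_div_lt habs
          have h1 := (h m).1
          have h2 := (h m).2
          have habs2 : |z - f^[k] w| ≤ 1/((m:ℝ)+1) := abs_le.mpr ⟨by linarith, by linarith⟩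
          linarith
        · rintro rfl m
          have hr : (0:ℝ) < 1/((m:ℝ)+1) := by positivity
          constructor <;> linarith
      have htd := tendsto_measure_iInter_atTop (μ := μ)
        (fun m => measurableSet_Icc.nullMeasurableSet) hanti ⟨0, measure_ne_top μ _⟩
      rw [hiFm] at htd
      exact ge_of_tendsto htd (Filter.Eventually.of_forall hFm)
    have hinj : ∀ k k' : ℕ, k < k' → f^[k] w ≠ f^[k'] w := by
      intro k k' hkk' heq
      have h1 : f^[k' - k] (f^[k] w) = f^[k] w := by
        rw [← Function.iterate_add_apply, show k' - k + k = k' from by omega]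
        exact heq.symm
      exact hnp (f^[k] w) (hf.iterate k hwIcc) (k' - k) (by omega) h1
    obtain ⟨M, hM⟩ := ENNReal.exists_inv_nat_lt hε40
    have hM0 : (M : ℝ≥0∞) ≠ 0 := by
      intro h
      rw [h, ENNReal.inv_zero] at hM
      exact absurd (lt_of_lt_of_le hM (le_trans hε4le hε1)) (by simp)
    have hsumle : ∑ k ∈ Finset.range M, μ {f^[k] w} ≤ 1 := by
      rw [← measure_biUnion_finset ?_ (fun k _ => measurableSet_singleton _)]
      · exact le_trans (measure_mono (subset_univ _)) (le_of_eq hμ.measure_univ)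
      · intro k hk k' hk' hne
        rw [Function.onFun, Set.disjoint_singleton]
        rcases lt_or_gt_of_ne hne with h | h
        · exact hinj _ _ h
        · exact (hinj _ _ h).symm
    have hsumge : (M : ℝ≥0∞) * ε4 ≤ ∑ k ∈ Finset.range M, μ {f^[k] w} := by
      calc (M : ℝ≥0∞) * ε4 = ∑ _k ∈ Finset.range M, ε4 := by
            rw [Finset.sum_const, Finset.card_range, nsmul_eq_mul]
        _ ≤ _ := Finset.sum_le_sum (fun k _ => key4 k)
    have h1M : (1 : ℝ≥0∞) < (M : ℝ≥0∞) * ε4 := by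
      have hcancel : (M : ℝ≥0∞) * (M : ℝ≥0∞)⁻¹ = 1 :=
        ENNReal.mul_inv_cancel hM0 (ENNReal.natCast_ne_top M)
      calc (1 : ℝ≥0∞) = (M : ℝ≥0∞) * (M : ℝ≥0∞)⁻¹ := hcancel.symm
        _ < (M : ℝ≥0∞) * ε4 := by
            rw [ENNReal.mul_lt_mul_iff_right hM0 (ENNReal.natCast_ne_top M)]
            exact hM
    exact absurd (le_trans hsumge hsumle) (not_le.mpr h1M)
  -- Step B : μ is supported on [0,1]
  have hIcc1 : μ (Icc (0:ℝ) 1) = 1 := by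
    refine le_antisymm prob_le_one ?_
    have h1 : ∀ j, ν j (Icc (0:ℝ) 1) = 1 := fun j => by
      have := (hνprob j).measure_univ
      have h0 : ν j (Icc (0:ℝ) 1)ᶜ = 0 :=
        hνzero j _ measurableSet_Icc.compl (fun k h => h (hxIcc k))
      have := measure_add_measure_compl (μ := ν j) (s := Icc (0:ℝ) 1) measurableSet_Icc
      rw [h0, add_zero, (hνprob j).measure_univ] at this
      exact this
    have h2 := hclosed (Icc (0:ℝ) 1) isClosed_Icc
    calc (1:ℝ≥0∞) = limsup (fun j => ν j (Icc (0:ℝ) 1)) atTop := by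
            simp only [h1]; exact (limsup_const _).symm
      _ ≤ μ (Icc (0:ℝ) 1) := h2
  -- the set E where f is continuous
  set E : Set ℝ := Ioo (0:ℝ) 1 \ P.D with hEdef
  have hEmeas : MeasurableSet E := measurableSet_Ioo.diff (aux_D_meas P)
  have hD0' : μ P.D = 0 := by
    have : P.D = ⋃ i : Fin (P.d + 2), {P.pt i} := by
      ext z; simp [PiecewiseContData.D, eq_comm]
    rw [this]
    exact measure_iUnion_null fun i => hD0 _ ⟨i, rfl⟩
  have hEc0 : μ Eᶜ = 0 := by
    have hIccc : μ (Icc (0:ℝ) 1)ᶜ = 0 := by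
      rw [measure_compl measurableSet_Icc (measure_ne_top μ _), hIcc1]
      simp
    refine measure_mono_null ?_ (measure_union_null hIccc hD0')
    intro z hz
    simp only [hEdef, mem_compl_iff, mem_diff, not_and, not_not] at hz
    rw [Set.mem_union]
    by_cases hzI : z ∈ Icc (0:ℝ) 1
    · rcases eq_or_lt_of_le hzI.1 with h0 | h0
      · exact Or.inr ⟨0, by rw [P.first, ← h0]⟩
      · rcases eq_or_lt_of_le hzI.2 with h1 | h1
        · exact Or.inr ⟨Fin.last _, by rw [P.last, h1]⟩
        · exact Or.inr (hz ⟨h0, h1⟩)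
    · exact Or.inl hzI
  have hfE : ∀ z ∈ E, ContinuousAt f z := fun z hz =>
    aux_contAt P ⟨le_of_lt hz.1.1, le_of_lt hz.1.2⟩ hz.2
  -- measurable modification g of f
  set g : ℝ → ℝ := fun z => if z ∈ E then f z else 2 with hgdef
  have hgE : ∀ z ∈ E, g z = f z := fun z hz => by simp [hgdef, hz]
  have hgmeas : Measurable g := by
    intro s hs
    have : g ⁻¹' s = (E ∩ f ⁻¹' s) ∪ (Eᶜ ∩ (if (2:ℝ) ∈ s then univ else ∅)) := by
      ext z
      by_cases hz : z ∈ E <;> by_cases h2 : (2:ℝ) ∈ s <;>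
        simp [hgdef, hz, h2]
    rw [this]
    refine MeasurableSet.union (aux_E_inter_meas P hs) ?_
    exact hEmeas.compl.inter (by split <;> simp)
  -- key invariance of integrals
  have hkey : ∀ φ : BoundedContinuousFunction ℝ ℝ, ∫ z, φ (g z) ∂μ = ∫ z, φ z ∂μ := by
    intro φ
    have hφgmeas : AEStronglyMeasurable (fun z => φ (g z)) μ :=
      (φ.continuous.measurable.comp hgmeas).aestronglyMeasurable
    have hφgint : Integrable (fun z => φ (g z)) μ :=
      Integrable.mono' (integrable_const ‖φ‖) hφgmeas
        (Filter.Eventually.of_forall fun z => φ.norm_coe_le_norm (g z))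
    have hEopen : IsOpen E := isOpen_Ioo.sdiff (Set.finite_range P.pt).isClosed
    have hmain : ∀ ε' : ℝ, 0 < ε' →
        |(∫ z, φ (g z) ∂μ) - ∫ z, φ z ∂μ| ≤ (2 * ‖φ‖) * ε' := by
      intro ε' hε'
      have hEcne : Eᶜ.Nonempty := ⟨2, fun h => (by norm_num : ¬ (2:ℝ) < 1) h.1.2⟩
      set dE : ℝ → ℝ := fun z => Metric.infDist z Eᶜ with hdE
      have hdEcont : Continuous dE := Metric.continuous_infDist_pt _
      have hdEnn : ∀ z, 0 ≤ dE z := fun _ => Metric.infDist_nonneg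
      set T : ℕ → Set ℝ := fun m => {z | dE z ≤ 1 / ((m : ℝ) + 1)} with hT
      have hTclosed : ∀ m, IsClosed (T m) := fun m => isClosed_le hdEcont continuous_const
      have hTmeas : ∀ m, MeasurableSet (T m) := fun m => (hTclosed m).measurableSet
      have hTanti : Antitone T := by
        intro m m' hmm' z hz
        simp only [hT, mem_setOf_eq] at hz ⊢
        refine le_trans hz ?_
        have h1 : (0:ℝ) < (m : ℝ) + 1 := by positivity
        have h2 : (m : ℝ) + 1 ≤ (m' : ℝ) + 1 := by
          have : (m : ℝ) ≤ (m' : ℝ) := by exact_mod_cast hmm'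
          linarith
        exact one_div_le_one_div_of_le h1 h2
      have hTinter : ⋂ m, T m = Eᶜ := by
        ext z
        simp only [mem_iInter, hT, mem_setOf_eq]
        constructor
        · intro h
          have h0 : dE z = 0 := by
            by_contra h0
            have hpos : 0 < dE z := lt_of_le_of_ne (hdEnn z) (Ne.symm h0)
            obtain ⟨m, hm⟩ := exists_nat_one_div_lt hpos
            exact absurd (h m) (not_le.mpr hm)
          have h1 : z ∈ closure Eᶜ := (Metric.mem_closure_iff_infDist_zero hEcne).mpr h0
          rwa [hEopen.isClosed_compl.closure_eq] at h1
        · intro hz m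
          rw [hdE]
          simp only []
          rw [Metric.infDist_zero_of_mem hz]
          positivity
      have hlim := tendsto_measure_iInter_atTop (μ := μ)
        (fun m => (hTmeas m).nullMeasurableSet) hTanti ⟨0, measure_ne_top μ _⟩
      rw [hTinter, hEc0] at hlim
      have hev : ∀ᶠ m in atTop, μ (T m) < ENNReal.ofReal ε' :=
        hlim.eventually_lt_const (ENNReal.ofReal_pos.mpr hε')
      obtain ⟨m0, hm0⟩ := hev.exists
      set δ : ℝ := 1 / ((m0 : ℝ) + 1) with hδ
      have hδpos : 0 < δ := by positivity
      set χ : ℝ → ℝ := fun z => min 1 (dE z / δ) with hχ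
      have hχcont : Continuous χ := continuous_const.min (hdEcont.div_const δ)
      have hχ0 : ∀ z, 0 ≤ χ z := fun z => le_min (by norm_num) (div_nonneg (hdEnn z) hδpos.le)
      have hχ1 : ∀ z, χ z ≤ 1 := fun _ => min_le_left _ _
      have hχEc : ∀ z ∈ Eᶜ, χ z = 0 := by
        intro z hz
        rw [hχ]
        simp only []
        rw [hdE]
        simp only []
        rw [Metric.infDist_zero_of_mem hz]
        norm_num
      set ψ : ℝ → ℝ := fun z => χ z * φ (f z) with hψ
      have hψbd : ∀ z, ‖ψ z‖ ≤ ‖φ‖ := by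
        intro z
        rw [hψ]
        simp only [norm_mul]
        calc ‖χ z‖ * ‖φ (f z)‖ ≤ 1 * ‖φ‖ := by
              apply mul_le_mul _ (φ.norm_coe_le_norm (f z)) (norm_nonneg _) (by norm_num)
              rw [Real.norm_of_nonneg (hχ0 z)]; exact hχ1 z
          _ = ‖φ‖ := one_mul _
      have hψcont : Continuous ψ := by
        rw [continuous_iff_continuousAt]
        intro z
        by_cases hz : z ∈ E
        · exact (hχcont.continuousAt).mul ((φ.continuous.continuousAt).comp (hfE z hz))
        · have hz0 : χ z = 0 := hχEc z hz
          have hψz : ψ z = 0 := by rw [hψ]; simp only []; rw [hz0, zero_mul]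
          rw [ContinuousAt, hψz]
          apply squeeze_zero_norm (a := fun y => ‖φ‖ * χ y)
          · intro y
            rw [hψ]
            simp only [norm_mul]
            rw [Real.norm_of_nonneg (hχ0 y), mul_comm]
            exact mul_le_mul_of_nonneg_right (φ.norm_coe_le_norm (f y)) (hχ0 y)
          · have hc : Continuous fun y => ‖φ‖ * χ y := continuous_const.mul hχcont
            have h := hc.tendsto z
            rwa [hz0, mul_zero] at h
      set ω : ℝ → ℝ := fun z => 1 - χ z with hω
      have hωcont : Continuous ω := continuous_const.sub hχcont
      have hωnn : ∀ z, 0 ≤ ω z := fun z => by rw [hω]; simp only []; linarith [hχ1 z]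
      have hωle : ∀ z, ω z ≤ 1 := fun z => by rw [hω]; simp only []; linarith [hχ0 z]
      have hω_ind : ∀ z, ω z ≤ Set.indicator (T m0) (fun _ => (1:ℝ)) z := by
        intro z
        by_cases hz : z ∈ T m0
        · rw [Set.indicator_of_mem hz]; exact hωle z
        · rw [Set.indicator_of_notMem hz]
          have hzT : ¬ dE z ≤ δ := hz
          have h1 : 1 ≤ dE z / δ :=
            (one_le_div hδpos).mpr (le_of_lt (not_le.mp hzT))
          have hχz : χ z = 1 := min_eq_left h1
          rw [hω]; simp only []; rw [hχz]; norm_num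
      have hωint : Integrable ω μ :=
        Integrable.mono' (integrable_const 1) hωcont.measurable.aestronglyMeasurable
          (Filter.Eventually.of_forall fun z => by
            rw [Real.norm_of_nonneg (hωnn z)]; exact hωle z)
      have hB : ∫ z, ω z ∂μ ≤ ε' := by
        calc ∫ z, ω z ∂μ ≤ ∫ z, Set.indicator (T m0) (fun _ => (1:ℝ)) z ∂μ :=
              integral_mono hωint ((integrable_const 1).indicator (hTmeas m0)) hω_ind
          _ = (μ (T m0)).toReal := by
              rw [integral_indicator_const _ (hTmeas m0)]; simp; rfl
          _ ≤ ε' := le_of_lt (ENNReal.toReal_lt_of_lt_ofReal hm0)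
      have hψint : Integrable ψ μ :=
        Integrable.mono' (integrable_const ‖φ‖) hψcont.measurable.aestronglyMeasurable
          (Filter.Eventually.of_forall hψbd)
      have hAlim : Tendsto (fun j => ∫ z, ψ z ∂(ν j)) atTop (𝓝 (∫ z, ψ z ∂μ)) :=
        (hconv ψ hψcont).comp (tendsto_add_atTop_nat 1)
      have hClim : Tendsto (fun j => ∫ z, (φ : ℝ → ℝ) z ∂(ν j)) atTop
          (𝓝 (∫ z, (φ : ℝ → ℝ) z ∂μ)) :=
        (hconv _ φ.continuous).comp (tendsto_add_atTop_nat 1)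
      have hDlim : Tendsto (fun j => ∫ z, ω z ∂(ν j)) atTop (𝓝 (∫ z, ω z ∂μ)) :=
        (hconv ω hωcont).comp (tendsto_add_atTop_nat 1)
      have hAB : ∀ j, |(∫ z, ψ z ∂(ν j)) - ∫ z, φ (f z) ∂(ν j)|
          ≤ ‖φ‖ * ∫ z, ω z ∂(ν j) := by
        intro j
        have hsum : |∑ k ∈ Finset.range (N j), (ψ (x k) - φ (f (x k)))|
            ≤ ∑ k ∈ Finset.range (N j), ω (x k) * ‖φ‖ := by
          calc |∑ k ∈ Finset.range (N j), (ψ (x k) - φ (f (x k)))|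
              ≤ ∑ k ∈ Finset.range (N j), |ψ (x k) - φ (f (x k))| :=
                Finset.abs_sum_le_sum_abs _ _
            _ ≤ ∑ k ∈ Finset.range (N j), ω (x k) * ‖φ‖ := by
                apply Finset.sum_le_sum
                intro k _
                have heq1 : ψ (x k) - φ (f (x k)) = (χ (x k) - 1) * φ (f (x k)) := by
                  rw [hψ]; simp only []; ring
                rw [heq1, abs_mul]
                have habs : |χ (x k) - 1| = ω (x k) := by
                  rw [abs_sub_comm, abs_of_nonneg (by linarith [hχ1 (x k)] : (0:ℝ) ≤ 1 - χ (x k))]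
                rw [habs]
                exact mul_le_mul_of_nonneg_left (φ.norm_coe_le_norm (f (x k))) (hωnn (x k))
        rw [hνint j ψ, hνint j (fun z => φ (f z)), hνint j ω, ← mul_sub,
          ← Finset.sum_sub_distrib, abs_mul,
          abs_of_nonneg (by positivity : (0:ℝ) ≤ ((N j : ℝ))⁻¹)]
        calc ((N j : ℝ))⁻¹ * |∑ k ∈ Finset.range (N j), (ψ (x k) - φ (f (x k)))|
            ≤ ((N j : ℝ))⁻¹ * ∑ k ∈ Finset.range (N j), ω (x k) * ‖φ‖ :=
              mul_le_mul_of_nonneg_left hsum (by positivity)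
          _ = ‖φ‖ * (((N j : ℝ))⁻¹ * ∑ k ∈ Finset.range (N j), ω (x k)) := by
              rw [← Finset.sum_mul]; ring
      have hident : ∀ j, (∫ z, φ (f z) ∂(ν j)) - (∫ z, (φ : ℝ → ℝ) z ∂(ν j))
          = ((N j : ℝ))⁻¹ * (φ (x (N j)) - φ (x 0)) := by
        intro j
        rw [hνint j (fun z => φ (f z)), hνint j (fun z => (φ : ℝ → ℝ) z), ← mul_sub]
        congr 1
        have hstep : ∀ k, φ (f (x k)) = φ (x (k + 1)) := by
          intro k
          congr 1
          rw [hxdef]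
          exact (Function.iterate_succ_apply' f k p).symm
        rw [Finset.sum_congr rfl (fun k _ => hstep k)]
        have hsum1 := Finset.sum_range_succ' (fun k => φ (x k)) (N j)
        have hsum2 := Finset.sum_range_succ (fun k => φ (x k)) (N j)
        linarith
      have hBC : Tendsto (fun j => (∫ z, φ (f z) ∂(ν j)) - ∫ z, (φ : ℝ → ℝ) z ∂(ν j))
          atTop (𝓝 0) := by
        rw [tendsto_congr hident]
        apply squeeze_zero_norm (a := fun j => ((N j : ℝ))⁻¹ * (2 * ‖φ‖))
        · intro j
          rw [norm_mul, Real.norm_of_nonneg (by positivity : (0:ℝ) ≤ ((N j : ℝ))⁻¹)]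
          apply mul_le_mul_of_nonneg_left _ (by positivity)
          calc ‖φ (x (N j)) - φ (x 0)‖ ≤ ‖φ (x (N j))‖ + ‖φ (x 0)‖ := norm_sub_le _ _
            _ ≤ ‖φ‖ + ‖φ‖ := add_le_add (φ.norm_coe_le_norm _) (φ.norm_coe_le_norm _)
            _ = 2 * ‖φ‖ := by ring
        · have hNinv : Tendsto (fun j => ((N j : ℝ))⁻¹) atTop (𝓝 0) :=
            tendsto_inv_atTop_zero.comp (tendsto_natCast_atTop_atTop.comp hNtop)
          have h := hNinv.mul_const (2 * ‖φ‖)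
          rwa [zero_mul] at h
      have hBlim : Tendsto (fun j => ∫ z, φ (f z) ∂(ν j)) atTop
          (𝓝 (∫ z, (φ : ℝ → ℝ) z ∂μ)) := by
        have h := hBC.add hClim
        rw [zero_add] at h
        have heq2 : (fun j => ∫ z, φ (f z) ∂(ν j))
            = fun j => ((∫ z, φ (f z) ∂(ν j)) - ∫ z, (φ : ℝ → ℝ) z ∂(ν j))
              + ∫ z, (φ : ℝ → ℝ) z ∂(ν j) := by
          ext j; ring
        rw [heq2]
        exact h
      have h1 : |(∫ z, ψ z ∂μ) - ∫ z, (φ : ℝ → ℝ) z ∂μ| ≤ ‖φ‖ * ∫ z, ω z ∂μ := by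
        have htend : Tendsto (fun j => |(∫ z, ψ z ∂(ν j)) - ∫ z, φ (f z) ∂(ν j)|) atTop
            (𝓝 |(∫ z, ψ z ∂μ) - ∫ z, (φ : ℝ → ℝ) z ∂μ|) := (hAlim.sub hBlim).abs
        have htend2 : Tendsto (fun j => ‖φ‖ * ∫ z, ω z ∂(ν j)) atTop
            (𝓝 (‖φ‖ * ∫ z, ω z ∂μ)) := hDlim.const_mul ‖φ‖
        exact le_of_tendsto_of_tendsto' htend htend2 hAB
      have h2 : |(∫ z, ψ z ∂μ) - ∫ z, φ (g z) ∂μ| ≤ ‖φ‖ * ∫ z, ω z ∂μ := by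
        rw [← integral_sub hψint hφgint]
        have hptw : ∀ z, |ψ z - φ (g z)| ≤ ‖φ‖ * ω z := by
          intro z
          by_cases hz : z ∈ E
          · rw [hgE z hz]
            have heq1 : ψ z - φ (f z) = (χ z - 1) * φ (f z) := by
              rw [hψ]; simp only []; ring
            rw [heq1, abs_mul]
            have habs : |χ z - 1| = ω z := by
              rw [abs_sub_comm, abs_of_nonneg (by linarith [hχ1 z] : (0:ℝ) ≤ 1 - χ z)]
            rw [habs, mul_comm]
            exact mul_le_mul_of_nonneg_right
              (by simpa [Real.norm_eq_abs] using φ.norm_coe_le_norm (f z)) (hωnn z)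
          · have hψz : ψ z = 0 := by rw [hψ]; simp only []; rw [hχEc z hz, zero_mul]
            have hωz : ω z = 1 := by rw [hω]; simp only []; rw [hχEc z hz]; ring
            rw [hψz, hωz, zero_sub, abs_neg, mul_one]
            exact φ.norm_coe_le_norm (g z)
        calc |∫ z, (ψ z - φ (g z)) ∂μ| ≤ ∫ z, |ψ z - φ (g z)| ∂μ := by
              simpa [Real.norm_eq_abs] using
                MeasureTheory.norm_integral_le_integral_norm (μ := μ)
                  (fun z => ψ z - φ (g z))
          _ ≤ ∫ z, ‖φ‖ * ω z ∂μ :=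
              integral_mono ((hψint.sub hφgint).abs) (hωint.const_mul ‖φ‖) hptw
          _ = ‖φ‖ * ∫ z, ω z ∂μ := integral_const_mul _ _
      have hfin : |(∫ z, φ (g z) ∂μ) - ∫ z, (φ : ℝ → ℝ) z ∂μ|
          ≤ 2 * (‖φ‖ * ∫ z, ω z ∂μ) := by
        have htri := abs_sub_le (∫ z, φ (g z) ∂μ) (∫ z, ψ z ∂μ) (∫ z, (φ : ℝ → ℝ) z ∂μ)
        have hcomm : |(∫ z, φ (g z) ∂μ) - ∫ z, ψ z ∂μ|
            = |(∫ z, ψ z ∂μ) - ∫ z, φ (g z) ∂μ| := abs_sub_comm _ _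
        linarith
      have hφω : ‖φ‖ * ∫ z, ω z ∂μ ≤ ‖φ‖ * ε' :=
        mul_le_mul_of_nonneg_left hB (norm_nonneg _)
      linarith
    have hle : ∀ ε' : ℝ, 0 < ε' → |(∫ z, φ (g z) ∂μ) - ∫ z, φ z ∂μ| ≤ ε' := by
      intro ε' hε'
      have hpos : 0 < ε' / (2 * ‖φ‖ + 1) := by positivity
      have hm := hmain _ hpos
      have hb : (2 * ‖φ‖) * (ε' / (2 * ‖φ‖ + 1)) ≤ ε' := by
        have hne : (2 * ‖φ‖ + 1) ≠ 0 := by positivity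
        have h2 := mul_le_mul_of_nonneg_right
          (show 2 * ‖φ‖ ≤ 2 * ‖φ‖ + 1 by linarith) (le_of_lt hpos)
        have h3 : (2 * ‖φ‖ + 1) * (ε' / (2 * ‖φ‖ + 1)) = ε' := mul_div_cancel₀ _ hne
        linarith
      linarith
    have h0 : |(∫ z, φ (g z) ∂μ) - ∫ z, φ z ∂μ| ≤ 0 := by
      by_contra hc
      push_neg at hc
      have := hle (|(∫ z, φ (g z) ∂μ) - ∫ z, φ z ∂μ| / 2) (by linarith)
      linarith
    have hnn := abs_nonneg ((∫ z, φ (g z) ∂μ) - ∫ z, φ z ∂μ)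
    have heq0 : (∫ z, φ (g z) ∂μ) - ∫ z, φ z ∂μ = 0 :=
      abs_eq_zero.mp (le_antisymm h0 hnn)
    linarith
  -- conclude map g μ = μ
  have hmap : Measure.map g μ = μ := by
    haveI := MeasureTheory.Measure.isProbabilityMeasure_map (μ := μ) hgmeas.aemeasurable
    refine ext_of_forall_lintegral_eq_of_IsFiniteMeasure ?_
    intro F
    have hiso : Isometry ((↑) : ℝ≥0 → ℝ) := isometry_subtype_coe
    set φ := BoundedContinuousFunction.comp _ hiso.lipschitz F with hφdef
    have hφfn : ∀ z, (φ : ℝ → ℝ) z = ((F z : ℝ≥0) : ℝ) := fun z => rfl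
    have hmeasF : Measurable fun z => ((F z : ℝ≥0) : ℝ≥0∞) :=
      measurable_coe_nnreal_ennreal.comp F.continuous.measurable
    rw [lintegral_map hmeasF hgmeas]
    have hFbd : ∀ z, ‖((F z : ℝ≥0) : ℝ)‖ ≤ ((nndist F 0 : ℝ≥0) : ℝ) := by
      intro z
      rw [Real.norm_of_nonneg (NNReal.coe_nonneg _), NNReal.coe_le_coe]
      rw [nndist_comm]; exact_mod_cast F.apply_le_nndist_zero z
    have hint1 : Integrable (fun z => ((F (g z) : ℝ≥0) : ℝ)) μ := by
      refine Integrable.mono' (integrable_const ((nndist F 0 : ℝ≥0) : ℝ))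
        (((NNReal.continuous_coe.comp F.continuous).measurable.comp
          hgmeas).aestronglyMeasurable) ?_
      filter_upwards with z
      exact hFbd (g z)
    have hint2 : Integrable (fun z => ((F z : ℝ≥0) : ℝ)) μ := by
      refine Integrable.mono' (integrable_const ((nndist F 0 : ℝ≥0) : ℝ))
        ((NNReal.continuous_coe.comp F.continuous).measurable).aestronglyMeasurable ?_
      filter_upwards with z
      exact hFbd z
    have h1 : ∫⁻ z, ((F (g z) : ℝ≥0) : ℝ≥0∞) ∂μ
        = ENNReal.ofReal (∫ z, ((F (g z) : ℝ≥0) : ℝ) ∂μ) := by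
      rw [ofReal_integral_eq_lintegral_ofReal hint1
        (Filter.Eventually.of_forall fun z => NNReal.coe_nonneg _)]
      simp [ENNReal.ofReal_coe_nnreal]
    have h2 : ∫⁻ z, ((F z : ℝ≥0) : ℝ≥0∞) ∂μ
        = ENNReal.ofReal (∫ z, ((F z : ℝ≥0) : ℝ) ∂μ) := by
      rw [ofReal_integral_eq_lintegral_ofReal hint2
        (Filter.Eventually.of_forall fun z => NNReal.coe_nonneg _)]
      simp [ENNReal.ofReal_coe_nnreal]
    rw [h1, h2]
    congr 1
    have := hkey φ
    simpa [hφfn] using this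
  -- finish
  intro B hB
  have hsub : ∀ (A : Set ℝ), μ A = μ (A ∩ E) := by
    intro A
    refine le_antisymm ?_ (measure_mono inter_subset_left)
    calc μ A ≤ μ (A ∩ E) + μ (A \ E) := measure_le_inter_add_diff μ A E
      _ ≤ μ (A ∩ E) + μ Eᶜ := by gcongr; exact diff_subset_compl A E
      _ = μ (A ∩ E) := by rw [hEc0, add_zero]
  have h1 : f ⁻¹' B ∩ E = g ⁻¹' B ∩ E := by
    ext z
    simp only [mem_inter_iff, mem_preimage]
    constructor
    · rintro ⟨hz1, hz2⟩
      exact ⟨by rw [hgE z hz2]; exact hz1, hz2⟩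
    · rintro ⟨hz1, hz2⟩
      exact ⟨by rw [← hgE z hz2]; exact hz1, hz2⟩
  calc μ (f ⁻¹' B) = μ (f ⁻¹' B ∩ E) := hsub _
    _ = μ (g ⁻¹' B ∩ E) := by rw [h1]
    _ = μ (g ⁻¹' B) := (hsub _).symm
    _ = Measure.map g μ B := (Measure.map_apply hgmeas hB).symm
    _ = μ B := by rw [hmap]
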